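/- For every σ > 0, with f_G(θ) = (1/√(2πσ²))·exp(−θ²/(2σ²)), one has −∫_{−π}^{π} f_G(θ)·ln f_G(θ) dθ = (∫_{−π}^{π} f_G(θ) dθ)·(1/2)·ln(2πeσ²) − √(π/(2σ²))·exp(−π²/(2σ²)). -/

import Mathlib

open Real MeasureTheory intervalIntegral

/-- Entropy integral of a Gaussian density restricted to `[−π, π]` (from the
proof of the paper's Lemma 13): for `σ > 0` and
`f_G(θ) = (1/√(2πσ²))·exp(−θ²/(2σ²))`,
`−∫_{−π}^{π} f_G ln f_G = (∫_{−π}^{π} f_G)·(1/2)·ln(2πeσ²) − √(π/(2σ²))·e^{−π²/(2σ²)}`. -/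
theorem stmt_13 (σ : ℝ) (hσ : 0 < σ) :
    -(∫ θ in (-Real.pi)..Real.pi,
        (1 / Real.sqrt (2 * Real.pi * σ ^ 2)) * Real.exp (-θ ^ 2 / (2 * σ ^ 2)) *
          Real.log ((1 / Real.sqrt (2 * Real.pi * σ ^ 2)) *
            Real.exp (-θ ^ 2 / (2 * σ ^ 2))))
      = (∫ θ in (-Real.pi)..Real.pi,
            (1 / Real.sqrt (2 * Real.pi * σ ^ 2)) * Real.exp (-θ ^ 2 / (2 * σ ^ 2))) *
          ((1 / 2) * Real.log (2 * Real.pi * Real.exp 1 * σ ^ 2))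
        - Real.sqrt (Real.pi / (2 * σ ^ 2)) *
            Real.exp (-Real.pi ^ 2 / (2 * σ ^ 2)) := by
  have hπ := Real.pi_pos
  have h2 : (0:ℝ) < 2 * Real.pi * σ ^ 2 := by positivity
  have hs : (0:ℝ) < Real.sqrt (2 * Real.pi * σ ^ 2) := Real.sqrt_pos.mpr h2
  set c : ℝ := 1 / Real.sqrt (2 * Real.pi * σ ^ 2) with hcdef
  have hc : 0 < c := by positivity
  have hσ2 : (0:ℝ) < 2 * σ ^ 2 := by positivity
  set K : ℝ := Real.log (2 * Real.pi * σ ^ 2) with hK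
  -- pointwise rewrite of the entropy integrand
  have hlog : ∀ θ : ℝ,
      c * Real.exp (-θ ^ 2 / (2 * σ ^ 2)) *
        Real.log (c * Real.exp (-θ ^ 2 / (2 * σ ^ 2)))
      = (-(1/2) * K) * (c * Real.exp (-θ ^ 2 / (2 * σ ^ 2)))
        - (c * Real.exp (-θ ^ 2 / (2 * σ ^ 2)) * (θ ^ 2 / (2 * σ ^ 2))) := by
    intro θ
    rw [Real.log_mul (ne_of_gt hc) (Real.exp_ne_zero _), Real.log_exp, hcdef,
      one_div, Real.log_inv, Real.log_sqrt h2.le, ← hK]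
    field_simp
    ring
  -- continuity / integrability facts
  have hFcont : Continuous fun θ : ℝ => c * Real.exp (-θ ^ 2 / (2 * σ ^ 2)) :=
    continuous_const.mul (Real.continuous_exp.comp (((continuous_pow 2).neg).div_const _))
  have hGcont : Continuous fun θ : ℝ =>
      c * Real.exp (-θ ^ 2 / (2 * σ ^ 2)) * (θ ^ 2 / (2 * σ ^ 2)) :=
    hFcont.mul ((continuous_pow 2).div_const _)
  have hFint : IntervalIntegrable (fun θ : ℝ => c * Real.exp (-θ ^ 2 / (2 * σ ^ 2)))
      volume (-Real.pi) Real.pi := hFcont.intervalIntegrable _ _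
  have hGint : IntervalIntegrable
      (fun θ : ℝ => c * Real.exp (-θ ^ 2 / (2 * σ ^ 2)) * (θ ^ 2 / (2 * σ ^ 2)))
      volume (-Real.pi) Real.pi := hGcont.intervalIntegrable _ _
  set I : ℝ := ∫ θ in (-Real.pi)..Real.pi, c * Real.exp (-θ ^ 2 / (2 * σ ^ 2)) with hI
  set J : ℝ := ∫ θ in (-Real.pi)..Real.pi,
      c * Real.exp (-θ ^ 2 / (2 * σ ^ 2)) * (θ ^ 2 / (2 * σ ^ 2)) with hJ
  -- FTC for the second-moment part
  have hderiv : ∀ θ : ℝ, HasDerivAt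
      (fun t : ℝ => -(1/2) * c * (t * Real.exp (-t ^ 2 / (2 * σ ^ 2))))
      (c * Real.exp (-θ ^ 2 / (2 * σ ^ 2)) * (θ ^ 2 / (2 * σ ^ 2))
        - (1/2) * (c * Real.exp (-θ ^ 2 / (2 * σ ^ 2)))) θ := by
    intro θ
    have h1 : HasDerivAt (fun t : ℝ => -t ^ 2 / (2 * σ ^ 2))
        (-(2 * θ ^ 1) / (2 * σ ^ 2)) θ := ((hasDerivAt_pow 2 θ).neg).div_const _
    have h2' : HasDerivAt (fun t : ℝ => Real.exp (-t ^ 2 / (2 * σ ^ 2)))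
        (Real.exp (-θ ^ 2 / (2 * σ ^ 2)) * (-(2 * θ ^ 1) / (2 * σ ^ 2))) θ := h1.exp
    have h3 : HasDerivAt (fun t : ℝ => t * Real.exp (-t ^ 2 / (2 * σ ^ 2)))
        (1 * Real.exp (-θ ^ 2 / (2 * σ ^ 2)) +
          θ * (Real.exp (-θ ^ 2 / (2 * σ ^ 2)) * (-(2 * θ ^ 1) / (2 * σ ^ 2)))) θ :=
      (hasDerivAt_id θ).mul h2'
    have h4 := h3.const_mul (-(1/2) * c)
    have heq : (-(1/2) * c) *
        (1 * Real.exp (-θ ^ 2 / (2 * σ ^ 2)) +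
          θ * (Real.exp (-θ ^ 2 / (2 * σ ^ 2)) * (-(2 * θ ^ 1) / (2 * σ ^ 2))))
        = c * Real.exp (-θ ^ 2 / (2 * σ ^ 2)) * (θ ^ 2 / (2 * σ ^ 2))
          - (1/2) * (c * Real.exp (-θ ^ 2 / (2 * σ ^ 2))) := by
      field_simp
      ring
    rw [heq] at h4
    exact h4
  have hsub : J - (1/2) * I = -(c * Real.pi * Real.exp (-Real.pi ^ 2 / (2 * σ ^ 2))) := by
    have hint : ∀ θ ∈ Set.uIcc (-Real.pi) Real.pi, HasDerivAt
        (fun t : ℝ => -(1/2) * c * (t * Real.exp (-t ^ 2 / (2 * σ ^ 2))))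
        (c * Real.exp (-θ ^ 2 / (2 * σ ^ 2)) * (θ ^ 2 / (2 * σ ^ 2))
          - (1/2) * (c * Real.exp (-θ ^ 2 / (2 * σ ^ 2)))) θ := fun θ _ => hderiv θ
    have hcontD : IntervalIntegrable
        (fun θ : ℝ => c * Real.exp (-θ ^ 2 / (2 * σ ^ 2)) * (θ ^ 2 / (2 * σ ^ 2))
          - (1/2) * (c * Real.exp (-θ ^ 2 / (2 * σ ^ 2))))
        volume (-Real.pi) Real.pi := hGint.sub (hFint.const_mul _)
    have := intervalIntegral.integral_eq_sub_of_hasDerivAt hint hcontD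
    rw [intervalIntegral.integral_sub hGint (hFint.const_mul _),
      intervalIntegral.integral_const_mul] at this
    rw [← hI, ← hJ] at this
    rw [this]
    have hnp : (-Real.pi) ^ 2 = Real.pi ^ 2 := by ring
    rw [hnp]
    ring
  -- sqrt identity
  have hsqrt : Real.sqrt (Real.pi / (2 * σ ^ 2)) = c * Real.pi := by
    rw [hcdef, div_mul_eq_mul_div, one_mul, eq_div_iff hs.ne',
      ← Real.sqrt_mul (by positivity : (0:ℝ) ≤ Real.pi / (2 * σ ^ 2)),
      show Real.pi / (2 * σ ^ 2) * (2 * Real.pi * σ ^ 2) = Real.pi ^ 2 by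
        field_simp,
      Real.sqrt_sq hπ.le]
  -- log identity
  have hloge : Real.log (2 * Real.pi * Real.exp 1 * σ ^ 2) = K + 1 := by
    rw [show (2 * Real.pi * Real.exp 1 * σ ^ 2) = (2 * Real.pi * σ ^ 2) * Real.exp 1 by ring,
      Real.log_mul (ne_of_gt h2) (Real.exp_ne_zero _), Real.log_exp, hK]
  -- assemble
  have hsplit : (∫ θ in (-Real.pi)..Real.pi,
      c * Real.exp (-θ ^ 2 / (2 * σ ^ 2)) *
        Real.log (c * Real.exp (-θ ^ 2 / (2 * σ ^ 2))))
      = (-(1/2) * K) * I - J := by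
    rw [intervalIntegral.integral_congr (g := fun θ =>
        (-(1/2) * K) * (c * Real.exp (-θ ^ 2 / (2 * σ ^ 2)))
          - (c * Real.exp (-θ ^ 2 / (2 * σ ^ 2)) * (θ ^ 2 / (2 * σ ^ 2))))
        (fun θ _ => hlog θ)]
    rw [intervalIntegral.integral_sub (hFint.const_mul _) hGint,
      intervalIntegral.integral_const_mul, ← hI, ← hJ]
  rw [hsplit, hsqrt, hloge]
  linear_combination hsub
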